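/- The generating function of plane partitions π with at most n rows and entries at most m, weighted by q^{|π|_c} where |π|_c = Σ_{(i,j)∈Des(π)} π_{ij}, equals ∏_{i=1}^{m} (1 − q^i)^{−n}. -/

import Mathlib

open scoped BigOperators

/-- A plane partition: a finitely supported `ℕ`-array (0-indexed) weakly
decreasing along rows and columns. -/
structure PlanePartition where
  entry : ℕ → ℕ → ℕ
  row_decr : ∀ i j, entry i (j + 1) ≤ entry i j
  col_decr : ∀ i j, entry (i + 1) j ≤ entry i j
  finite_support : {p : ℕ × ℕ | entry p.1 p.2 ≠ 0}.Finite

namespace PlanePartition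

/-- `π` has at most `n` (nonzero) rows. -/
def RowsLE (π : PlanePartition) (n : ℕ) : Prop := ∀ i j, n ≤ i → π.entry i j = 0

/-- `π` has at most `k` (nonzero) columns. -/
def ColsLE (π : PlanePartition) (k : ℕ) : Prop := ∀ i j, k ≤ j → π.entry i j = 0

/-- all entries of `π` are at most `m`. -/
def EntriesLE (π : PlanePartition) (m : ℕ) : Prop := ∀ i j, π.entry i j ≤ m

/-- The descent set of `π` (0-indexed cells). -/
def Des (π : PlanePartition) : Set (ℕ × ℕ) :=
  {p | π.entry (p.1 + 1) p.2 < π.entry p.1 p.2}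

/-- number of descents of `π`. -/
noncomputable def des (π : PlanePartition) : ℕ := π.Des.ncard

/-- `dmat π i ℓ` is the matrix entry `d_{i+1, ℓ+1}` of `Φ(π)`: the number of columns `j`
with `π_{ij} = ℓ+1 > π_{i+1,j}` (here `i`, `ℓ` are 0-indexed). -/
noncomputable def dmat (π : PlanePartition) (i ℓ : ℕ) : ℕ :=
  {j : ℕ | π.entry i j = ℓ + 1 ∧ π.entry (i + 1) j ≤ ℓ}.ncard

/-- the volume `|π|`. -/
noncomputable def vol (π : PlanePartition) : ℕ := ∑ᶠ p : ℕ × ℕ, π.entry p.1 p.2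

/-- the up-hook volume `|π|_{uh} = Σ_{(i,j) ∈ Des(π)} (π_{ij} + i - 1)` (1-indexed `i`;
in our 0-indexed convention the summand is `π.entry p.1 p.2 + p.1`). -/
noncomputable def uhvol (π : PlanePartition) : ℕ :=
  ∑ᶠ p ∈ π.Des, (π.entry p.1 p.2 + p.1)

/-- the corner volume `|π|_c = Σ_{(i,j) ∈ Des(π)} π_{ij}`. -/
noncomputable def cvol (π : PlanePartition) : ℕ :=
  ∑ᶠ p ∈ π.Des, π.entry p.1 p.2

/-- the trace `tr(π) = Σ_i π_{ii}`. -/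
noncomputable def trace (π : PlanePartition) : ℕ := ∑ᶠ i : ℕ, π.entry i i

/-- `colCount π v` is the number of columns of `π` containing the entry `v`. -/
noncomputable def colCount (π : PlanePartition) (v : ℕ) : ℕ :=
  {j : ℕ | ∃ i, π.entry i j = v}.ncard

/-- the length of row `i` (0-indexed) of `π`. -/
noncomputable def rowLen (π : PlanePartition) (i : ℕ) : ℕ :=
  {j : ℕ | π.entry i j ≠ 0}.ncard

/-- `π` is column-strict: entries strictly decrease down the columns (within the shape). -/
def ColStrict (π : PlanePartition) : Prop :=
  ∀ i j, π.entry i j ≠ 0 → π.entry (i + 1) j < π.entry i j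

/-- the shape of `π` is exactly the rectangle with `n` rows and `k` columns. -/
def ShapeRect (π : PlanePartition) (k n : ℕ) : Prop :=
  ∀ i j, π.entry i j ≠ 0 ↔ i < n ∧ j < k

end PlanePartition

/-- The Schur polynomial `s_{(k^n)}` of rectangular shape `(k^n)` in `N` variables
`x 0, …, x (N-1)`, defined via column-strict plane partitions of shape `(k^n)` with
entries at most `N`; the variable `x i` records entries equal to `i + 1`. -/
noncomputable def schurRect {R : Type*} [CommSemiring R] (k n N : ℕ) (x : ℕ → R) : R :=
  ∑ᶠ π ∈ {π : PlanePartition | π.ColStrict ∧ π.ShapeRect k n ∧ π.EntriesLE N},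
    ∏ i ∈ Finset.range N, x i ^ ({p : ℕ × ℕ | π.entry p.1 p.2 = i + 1}.ncard)

namespace CVaux

open PlanePartition

lemma PP_ext {π π' : PlanePartition} (h : π.entry = π'.entry) : π = π' := by
  cases π; cases π'; cases h; rfl

/-- A finite downward-closed set of naturals is a range. -/
lemma downset_eq_range (F : Finset ℕ) (h : ∀ a b : ℕ, a ≤ b → b ∈ F → a ∈ F) :
    F = Finset.range F.card := by
  have key : ∀ x, x ∈ F ↔ x < F.card := by
    intro x
    constructor
    · intro hx
      have hsub : Finset.range (x + 1) ⊆ F := by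
        intro y hy
        exact h y x (by simpa [Nat.lt_succ_iff] using Finset.mem_range.1 hy) hx
      have := Finset.card_le_card hsub
      simpa [Finset.card_range, Nat.succ_le_iff] using this
    · intro hx
      by_contra hxF
      have hsub : F ⊆ Finset.range x := by
        intro y hy
        rcases lt_or_ge y x with h' | h'
        · exact Finset.mem_range.2 h'
        · exact absurd (h x y h' hy) hxF
      have := Finset.card_le_card hsub
      simp [Finset.card_range] at this
      omega
  ext x; simp [key]

lemma downset_set_iff {S : Set ℕ} (hf : S.Finite) (h : ∀ a b : ℕ, a ≤ b → b ∈ S → a ∈ S) :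
    ∀ x, x ∈ S ↔ x < S.ncard := by
  have hF := downset_eq_range hf.toFinset
    (by intro a b hab hb; simp only [Set.Finite.mem_toFinset] at *; exact h a b hab hb)
  intro x
  rw [Set.ncard_eq_toFinset_card S hf, ← Set.Finite.mem_toFinset hf, hF]
  simp

/-! ### Reconstruction of a plane partition from its descent matrix -/

/-- `RR n m d i v` : number of `j` with entry `(i,j) ≥ v+1` in the reconstruction. -/
def RR (n m : ℕ) (d : ℕ → ℕ → ℕ) (i v : ℕ) : ℕ :=
  if h : i < n ∧ v < m then
    d i v + max (RR n m d (i + 1) v) (RR n m d i (v + 1))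
  else 0
termination_by (n - i) + (m - v)
decreasing_by all_goals omega

variable {n m : ℕ} {d d' : ℕ → ℕ → ℕ}

lemma RR_of_ge (i v : ℕ) (h : n ≤ i ∨ m ≤ v) : RR n m d i v = 0 := by
  rw [RR]; rw [dif_neg]; omega

lemma RR_spec {i v : ℕ} (hi : i < n) (hv : v < m) :
    RR n m d i v = d i v + max (RR n m d (i + 1) v) (RR n m d i (v + 1)) := by
  rw [RR]; rw [dif_pos ⟨hi, hv⟩]

lemma RR_congr (hdd : ∀ i v, i < n → v < m → d i v = d' i v) :
    ∀ i v, RR n m d i v = RR n m d' i v := by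
  have H : ∀ k i v, (n - i) + (m - v) = k → RR n m d i v = RR n m d' i v := by
    intro k
    induction k using Nat.strong_induction_on with
    | _ k ih =>
      intro i v hk
      by_cases h : i < n ∧ v < m
      · rw [RR_spec h.1 h.2, RR_spec h.1 h.2, hdd i v h.1 h.2,
          ih ((n - (i+1)) + (m - v)) (by omega) (i+1) v rfl,
          ih ((n - i) + (m - (v+1))) (by omega) i (v+1) rfl]
      · rw [RR_of_ge i v (by omega), RR_of_ge i v (by omega)]
  exact fun i v => H _ i v rfl

lemma RR_row_le (i v : ℕ) : RR n m d (i + 1) v ≤ RR n m d i v := by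
  by_cases h : i < n ∧ v < m
  · rw [RR_spec h.1 h.2]; omega
  · rw [RR_of_ge (i+1) v (by omega), RR_of_ge i v (by omega)]

lemma RR_col_le (i v : ℕ) : RR n m d i (v + 1) ≤ RR n m d i v := by
  by_cases h : i < n ∧ v < m
  · rw [RR_spec h.1 h.2]; omega
  · rw [RR_of_ge i (v+1) (by omega), RR_of_ge i v (by omega)]

lemma RR_col_mono : ∀ {v w : ℕ}, v ≤ w → ∀ i, RR n m d i w ≤ RR n m d i v := by
  intro v w h i
  induction w with
  | zero => simp_all
  | succ w ih =>
    rcases Nat.lt_or_ge v (w+1) with h' | h'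
    · exact le_trans (RR_col_le i w) (ih (by omega))
    · have : v = w + 1 := by omega
      simp [this]

lemma RR_row_mono : ∀ {i i' : ℕ}, i ≤ i' → ∀ v, RR n m d i' v ≤ RR n m d i v := by
  intro i i' h v
  induction i' with
  | zero => simp_all
  | succ i' ih =>
    rcases Nat.lt_or_ge i (i'+1) with h' | h'
    · exact le_trans (RR_row_le i' v) (ih (by omega))
    · have : i = i' + 1 := by omega
      simp [this]

/-- The entry function of the reconstructed plane partition. -/
def entryFn (n m : ℕ) (d : ℕ → ℕ → ℕ) (i j : ℕ) : ℕ :=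
  ((Finset.range m).filter (fun v => j < RR n m d i v)).card

lemma entryFn_le_m (i j : ℕ) : entryFn n m d i j ≤ m := by
  have := Finset.card_filter_le (Finset.range m) (fun v => j < RR n m d i v)
  simpa [Finset.card_range, entryFn] using this

lemma entryFn_ge_iff (i j v : ℕ) :
    v + 1 ≤ entryFn n m d i j ↔ v < m ∧ j < RR n m d i v := by
  set F := (Finset.range m).filter (fun v => j < RR n m d i v) with hF
  have hdown : ∀ a b : ℕ, a ≤ b → b ∈ F → a ∈ F := by
    intro a b hab hb
    simp only [hF, Finset.mem_filter, Finset.mem_range] at hb ⊢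
    exact ⟨by omega, lt_of_lt_of_le hb.2 (RR_col_mono hab i)⟩
  have hmem : v ∈ F ↔ v < F.card := by
    conv_lhs => rw [downset_eq_range F hdown]
    simp
  have hfe : entryFn n m d i j = F.card := rfl
  rw [hfe, Nat.succ_le_iff, ← hmem]
  simp [hF]

/-- The reconstructed plane partition. -/
noncomputable def toPP (n m : ℕ) (d : ℕ → ℕ → ℕ) : PlanePartition where
  entry := entryFn n m d
  row_decr := by
    intro i j
    apply Finset.card_le_card
    intro v hv
    simp only [Finset.mem_filter] at hv ⊢
    exact ⟨hv.1, by omega⟩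
  col_decr := by
    intro i j
    have h : ∀ v, v + 1 ≤ entryFn n m d (i+1) j → v + 1 ≤ entryFn n m d i j := by
      intro v hv
      rw [entryFn_ge_iff] at hv ⊢
      exact ⟨hv.1, lt_of_lt_of_le hv.2 (RR_row_le i v)⟩
    rcases Nat.eq_zero_or_pos (entryFn n m d (i+1) j) with h0 | h0
    · omega
    · have := h (entryFn n m d (i+1) j - 1) (by omega)
      omega
  finite_support := by
    apply Set.Finite.subset ((Finset.range n ×ˢ Finset.range (RR n m d 0 0)).finite_toSet)
    intro p hp
    simp only [Set.mem_setOf_eq] at hp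
    have h1 : 0 + 1 ≤ entryFn n m d p.1 p.2 := by omega
    rw [entryFn_ge_iff] at h1
    have h2 : p.2 < RR n m d 0 0 :=
      lt_of_lt_of_le h1.2 (le_trans (RR_col_mono (Nat.zero_le 0) p.1) (RR_row_mono (Nat.zero_le p.1) 0))
    have h3 : p.1 < n := by
      by_contra hc
      rw [RR_of_ge p.1 0 (by omega)] at h1
      omega
    simp [h3, h2]

lemma toPP_entry (i j : ℕ) : (toPP n m d).entry i j = entryFn n m d i j := rfl

lemma toPP_rowsLE : (toPP n m d).RowsLE n := by
  intro i j hi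
  have h := entryFn_ge_iff (n := n) (m := m) (d := d) i j 0
  by_contra hc
  have h1 : 0 + 1 ≤ entryFn n m d i j := by
    have : (toPP n m d).entry i j = entryFn n m d i j := rfl
    omega
  rw [entryFn_ge_iff] at h1
  rw [RR_of_ge i 0 (Or.inl hi)] at h1
  omega

lemma toPP_entriesLE : (toPP n m d).EntriesLE m := fun i j => entryFn_le_m i j

lemma set_Ico_ncard (a b : ℕ) : {j : ℕ | a ≤ j ∧ j < b}.ncard = b - a := by
  have : {j : ℕ | a ≤ j ∧ j < b} = ↑(Finset.Ico a b) := by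
    ext j; simp [Finset.mem_Ico]
  rw [this, Set.ncard_coe_finset, Nat.card_Ico]

lemma dmat_toPP {i v : ℕ} (hi : i < n) (hv : v < m) :
    (toPP n m d).dmat i v = d i v := by
  have hset : {j : ℕ | (toPP n m d).entry i j = v + 1 ∧ (toPP n m d).entry (i + 1) j ≤ v}
      = {j : ℕ | max (RR n m d (i+1) v) (RR n m d i (v+1)) ≤ j ∧ j < RR n m d i v} := by
    ext j
    simp only [Set.mem_setOf_eq, toPP_entry]
    have h1 := entryFn_ge_iff (n := n) (m := m) (d := d) i j v
    have h2 := entryFn_ge_iff (n := n) (m := m) (d := d) i j (v+1)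
    have h3 := entryFn_ge_iff (n := n) (m := m) (d := d) (i+1) j v
    have h4 : RR n m d i (v+1) = 0 ∨ v + 1 < m := by
      rcases Nat.lt_or_ge (v+1) m with h' | h'
      · exact Or.inr h'
      · exact Or.inl (RR_of_ge i (v+1) (Or.inr h'))
    constructor
    · rintro ⟨ha, hb⟩
      have hge : v + 1 ≤ entryFn n m d i j := by omega
      rw [h1] at hge
      have hnot : ¬ (v + 1 + 1 ≤ entryFn n m d i j) := by omega
      rw [h2] at hnot
      have hnot3 : ¬ (v + 1 ≤ entryFn n m d (i+1) j) := by omega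
      rw [h3] at hnot3
      push_neg at hnot hnot3
      constructor
      · have hb1 : RR n m d (i+1) v ≤ j := by
          by_contra hc
          exact absurd (hnot3 hv) (by omega)
        have hb2 : RR n m d i (v+1) ≤ j := by
          rcases h4 with h' | h'
          · omega
          · by_contra hc
            exact absurd (hnot h') (by omega)
        omega
      · exact hge.2
    · rintro ⟨ha, hb⟩
      have hge : v + 1 ≤ entryFn n m d i j := h1.2 ⟨hv, hb⟩
      have hnot : ¬ (v + 1 + 1 ≤ entryFn n m d i j) := by
        rw [h2]; rintro ⟨-, hc⟩; omega
      have hnot3 : ¬ (v + 1 ≤ entryFn n m d (i+1) j) := by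
        rw [h3]; rintro ⟨-, hc⟩; omega
      omega
  rw [dmat, hset, set_Ico_ncard, RR_spec hi hv]
  omega

/-! ### The descent matrix determines the plane partition -/

section Pi

variable (π : PlanePartition)

/-- column counts of a plane partition -/
noncomputable def Rpi (i v : ℕ) : ℕ := {j : ℕ | v + 1 ≤ π.entry i j}.ncard

lemma entry_row_mono {j j' : ℕ} (h : j ≤ j') (i : ℕ) : π.entry i j' ≤ π.entry i j := by
  induction j' with
  | zero => simp_all
  | succ j' ih =>
    rcases Nat.lt_or_ge j (j'+1) with h' | h'
    · exact le_trans (π.row_decr i j') (ih (by omega))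
    · have : j = j' + 1 := by omega
      simp [this]

lemma entry_col_mono {i i' : ℕ} (h : i ≤ i') (j : ℕ) : π.entry i' j ≤ π.entry i j := by
  induction i' with
  | zero => simp_all
  | succ i' ih =>
    rcases Nat.lt_or_ge i (i'+1) with h' | h'
    · exact le_trans (π.col_decr i' j) (ih (by omega))
    · have : i = i' + 1 := by omega
      simp [this]

lemma Rpi_finite (i v : ℕ) : {j : ℕ | v + 1 ≤ π.entry i j}.Finite := by
  have : {j : ℕ | v + 1 ≤ π.entry i j} ⊆ (fun j => ((i, j) : ℕ × ℕ)) ⁻¹' {p | π.entry p.1 p.2 ≠ 0} := by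
    intro j hj
    simp only [Set.mem_setOf_eq] at hj
    simp only [Set.mem_preimage, Set.mem_setOf_eq]
    omega
  exact Set.Finite.subset (Set.Finite.preimage (fun a _ b _ hab => by simpa using hab)
    π.finite_support) this

lemma Rpi_iff (i v j : ℕ) : v + 1 ≤ π.entry i j ↔ j < Rpi π i v := by
  exact downset_set_iff (Rpi_finite π i v)
    (fun a b hab hb => le_trans hb (entry_row_mono π hab i)) j

lemma Rpi_recur (i v : ℕ) :
    Rpi π i v = π.dmat i v + max (Rpi π (i+1) v) (Rpi π i (v+1)) := by
  have hset : {j : ℕ | π.entry i j = v + 1 ∧ π.entry (i + 1) j ≤ v}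
      = {j : ℕ | max (Rpi π (i+1) v) (Rpi π i (v+1)) ≤ j ∧ j < Rpi π i v} := by
    ext j
    simp only [Set.mem_setOf_eq]
    have h1 := Rpi_iff π i v j
    have h2 := Rpi_iff π i (v+1) j
    have h3 := Rpi_iff π (i+1) v j
    constructor
    · rintro ⟨ha, hb⟩
      have e1 : j < Rpi π i v := h1.1 (by omega)
      have e2 : ¬ j < Rpi π i (v+1) := fun hc => by have := h2.2 hc; omega
      have e3 : ¬ j < Rpi π (i+1) v := fun hc => by have := h3.2 hc; omega
      omega
    · rintro ⟨ha, hb⟩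
      have e1 : v + 1 ≤ π.entry i j := h1.2 hb
      have e2 : ¬ (v + 1 + 1 ≤ π.entry i j) := fun hc => by have := h2.1 hc; omega
      have e3 : ¬ (v + 1 ≤ π.entry (i+1) j) := fun hc => by have := h3.1 hc; omega
      omega
  have hmax1 : Rpi π (i+1) v ≤ Rpi π i v := by
    have h := fun j => (Rpi_iff π (i+1) v j)
    by_contra hc
    push_neg at hc
    have hj : Rpi π i v < Rpi π (i+1) v := hc
    have := (h (Rpi π i v)).2 hj
    have := (Rpi_iff π i v (Rpi π i v)).1 (le_trans this (π.col_decr i (Rpi π i v)))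
    omega
  have hmax2 : Rpi π i (v+1) ≤ Rpi π i v := by
    by_contra hc
    push_neg at hc
    have := (Rpi_iff π i (v+1) (Rpi π i v)).2 hc
    have := (Rpi_iff π i v (Rpi π i v)).1 (by omega)
    omega
  rw [dmat, hset, set_Ico_ncard]
  omega

lemma Rpi_row_zero {i : ℕ} (hr : π.RowsLE n) (hi : n ≤ i) (v : ℕ) : Rpi π i v = 0 := by
  have : {j : ℕ | v + 1 ≤ π.entry i j} = ∅ := by
    ext j; simp only [Set.mem_setOf_eq, Set.mem_empty_iff_false, iff_false]
    rw [hr i j hi]; omega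
  rw [Rpi, this, Set.ncard_empty]

lemma Rpi_col_zero {v : ℕ} (he : π.EntriesLE m) (hv : m ≤ v) (i : ℕ) : Rpi π i v = 0 := by
  have : {j : ℕ | v + 1 ≤ π.entry i j} = ∅ := by
    ext j; simp only [Set.mem_setOf_eq, Set.mem_empty_iff_false, iff_false]
    have := he i j; omega
  rw [Rpi, this, Set.ncard_empty]

lemma RR_eq_Rpi (hr : π.RowsLE n) (he : π.EntriesLE m) :
    ∀ i v, RR n m π.dmat i v = Rpi π i v := by
  have H : ∀ k i v, (n - i) + (m - v) = k → RR n m π.dmat i v = Rpi π i v := by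
    intro k
    induction k using Nat.strong_induction_on with
    | _ k ih =>
      intro i v hk
      by_cases h : i < n ∧ v < m
      · rw [RR_spec h.1 h.2,
          ih ((n - (i+1)) + (m - v)) (by omega) (i+1) v rfl,
          ih ((n - i) + (m - (v+1))) (by omega) i (v+1) rfl,
          ← Rpi_recur]
      · rw [RR_of_ge i v (by omega)]
        rcases Nat.lt_or_ge i n with h' | h'
        · exact (Rpi_col_zero π he (by omega) i).symm
        · exact (Rpi_row_zero π hr h' v).symm
  exact fun i v => H _ i v rfl

lemma toPP_dmat_eq (hr : π.RowsLE n) (he : π.EntriesLE m) :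
    toPP n m π.dmat = π := by
  apply PP_ext
  funext i j
  rw [toPP_entry]
  have key : ∀ v, v + 1 ≤ entryFn n m π.dmat i j ↔ v + 1 ≤ π.entry i j := by
    intro v
    rw [entryFn_ge_iff, RR_eq_Rpi π hr he]
    constructor
    · intro h; exact (Rpi_iff π i v j).2 h.2
    · intro h
      have hv : v < m := by have := he i j; omega
      exact ⟨hv, (Rpi_iff π i v j).1 h⟩
  have h1 := key (entryFn n m π.dmat i j - 1)
  have h2 := key (π.entry i j - 1)
  omega

end Pi


/-! ### corner volume via the descent matrix -/

lemma cvol_eq (π : PlanePartition) (hr : π.RowsLE n) (he : π.EntriesLE m) :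
    π.cvol = ∑ q ∈ Finset.range n ×ˢ Finset.range m, (q.2 + 1) * π.dmat q.1 q.2 := by
  have hDfin : π.Des.Finite := by
    apply π.finite_support.subset
    intro p hp
    simp only [Des, Set.mem_setOf_eq] at hp ⊢
    omega
  set D := hDfin.toFinset with hD
  have h0 : π.cvol = ∑ p ∈ D, π.entry p.1 p.2 := by
    rw [cvol, finsum_mem_eq_finite_toFinset_sum _ hDfin]
  set g : ℕ × ℕ → ℕ × ℕ := fun p => (p.1, π.entry p.1 p.2 - 1) with hg
  have hmaps : ∀ p ∈ D, g p ∈ Finset.range n ×ˢ Finset.range m := by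
    intro p hp
    rw [hD, Set.Finite.mem_toFinset] at hp
    simp only [Des, Set.mem_setOf_eq] at hp
    have h1 : π.entry p.1 p.2 ≠ 0 := by omega
    have h2 : p.1 < n := by
      by_contra hc
      exact h1 (hr p.1 p.2 (by omega))
    have h3 := he p.1 p.2
    simp only [hg, Finset.mem_product, Finset.mem_range]
    omega
  rw [h0, ← Finset.sum_fiberwise_of_maps_to hmaps]
  apply Finset.sum_congr rfl
  rintro ⟨i, v⟩ hq
  simp only [Finset.mem_product, Finset.mem_range] at hq
  have hfib : ∀ p ∈ D.filter (fun p => g p = (i, v)), π.entry p.1 p.2 = v + 1 := by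
    intro p hp
    simp only [Finset.mem_filter, hD, Set.Finite.mem_toFinset, Des, Set.mem_setOf_eq, hg,
      Prod.mk.injEq] at hp
    omega
  rw [Finset.sum_congr rfl hfib, Finset.sum_const, smul_eq_mul]
  have hcard : (D.filter (fun p => g p = (i, v))).card = π.dmat i v := by
    have himg : {j : ℕ | π.entry i j = v + 1 ∧ π.entry (i + 1) j ≤ v}
        = ↑((D.filter (fun p => g p = (i, v))).image Prod.snd) := by
      ext j
      simp only [Set.mem_setOf_eq, Finset.coe_image, Set.mem_image, Finset.mem_coe,
        Finset.mem_filter, hD, Set.Finite.mem_toFinset, Des, Set.mem_setOf_eq, hg,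
        Prod.mk.injEq]
      constructor
      · rintro ⟨ha, hb⟩
        refine ⟨(i, j), ⟨?_, rfl, ?_⟩, rfl⟩
        · show π.entry (i + 1) j < π.entry i j
          omega
        · show π.entry i j - 1 = v
          omega
      · rintro ⟨⟨p1, p2⟩, ⟨hdes, hp1, hp2⟩, hpj⟩
        simp only at hdes hp1 hp2 hpj
        subst hp1; subst hpj
        omega
    rw [dmat, himg, Set.ncard_coe_finset]
    rw [Finset.card_image_of_injOn]
    intro p hp p' hp' hpp
    simp only [Finset.mem_coe, Finset.mem_filter, hg, Prod.mk.injEq] at hp hp'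
    exact Prod.ext (hp.2.1.trans hp'.2.1.symm) hpp
  rw [hcard, mul_comm]

/-! ### The bijection with matrices -/

def extFn (n m : ℕ) (f : Fin n × Fin m → ℕ) : ℕ → ℕ → ℕ :=
  fun i v => if h : i < n ∧ v < m then f (⟨i, h.1⟩, ⟨v, h.2⟩) else 0

lemma extFn_apply (f : Fin n × Fin m → ℕ) (p : Fin n × Fin m) :
    extFn n m f (p.1 : ℕ) (p.2 : ℕ) = f p := by
  rw [extFn, dif_pos ⟨p.1.isLt, p.2.isLt⟩]

lemma sum_bridge (h : ℕ → ℕ → ℕ) :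
    ∑ p : Fin n × Fin m, ((p.2 : ℕ) + 1) * h (p.1 : ℕ) (p.2 : ℕ)
      = ∑ q ∈ Finset.range n ×ˢ Finset.range m, (q.2 + 1) * h q.1 q.2 := by
  rw [Finset.sum_product, Fintype.sum_prod_type]
  rw [← Fin.sum_univ_eq_sum_range (fun i => ∑ v ∈ Finset.range m, (v + 1) * h i v) n]
  apply Finset.sum_congr rfl
  intro a _
  rw [← Fin.sum_univ_eq_sum_range (fun v => (v + 1) * h (a : ℕ) v) m]

noncomputable def ppEquiv (n m N : ℕ) :
    {π : PlanePartition // π.RowsLE n ∧ π.EntriesLE m ∧ π.cvol = N} ≃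
    {f : Fin n × Fin m → ℕ // ∑ p : Fin n × Fin m, ((p.2 : ℕ) + 1) * f p = N} where
  toFun := fun ⟨π, hr, he, hc⟩ => ⟨fun p => π.dmat (p.1 : ℕ) (p.2 : ℕ), by
    rw [sum_bridge, ← cvol_eq π hr he]; exact hc⟩
  invFun := fun ⟨f, hf⟩ => ⟨toPP n m (extFn n m f), toPP_rowsLE, toPP_entriesLE, by
    rw [cvol_eq _ toPP_rowsLE toPP_entriesLE]
    have h1 : ∀ q ∈ Finset.range n ×ˢ Finset.range m,
        (q.2 + 1) * (toPP n m (extFn n m f)).dmat q.1 q.2 = (q.2 + 1) * extFn n m f q.1 q.2 := by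
      intro q hq
      simp only [Finset.mem_product, Finset.mem_range] at hq
      rw [dmat_toPP hq.1 hq.2]
    rw [Finset.sum_congr rfl h1, ← sum_bridge (extFn n m f), ← hf]
    apply Finset.sum_congr rfl
    intro p _
    rw [extFn_apply]⟩
  left_inv := by
    rintro ⟨π, hr, he, hc⟩
    apply Subtype.ext
    simp only
    have hcong : ∀ i v, i < n → v < m →
        extFn n m (fun p => π.dmat (p.1 : ℕ) (p.2 : ℕ)) i v = π.dmat i v := by
      intro i v hi hv
      rw [extFn, dif_pos ⟨hi, hv⟩]
    have hRR := RR_congr hcong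
    have hent : entryFn n m (extFn n m (fun p => π.dmat (p.1 : ℕ) (p.2 : ℕ)))
        = entryFn n m π.dmat := by
      funext i j
      rw [entryFn, entryFn]
      congr 1
      apply Finset.filter_congr
      intro v _
      rw [hRR]
    have : toPP n m (extFn n m (fun p => π.dmat (p.1 : ℕ) (p.2 : ℕ))) = toPP n m π.dmat :=
      PP_ext hent
    rw [this]
    exact toPP_dmat_eq π hr he
  right_inv := by
    rintro ⟨f, hf⟩
    apply Subtype.ext
    funext p
    simp only
    rw [dmat_toPP p.1.isLt p.2.isLt, extFn_apply]

/-! ### Power series side -/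

noncomputable def geomPS (k : ℕ) : PowerSeries ℚ := PowerSeries.mk fun j => if k ∣ j then 1 else 0

lemma geom_inv {k : ℕ} (hk : 0 < k) :
    ((1 - PowerSeries.X ^ k : PowerSeries ℚ))⁻¹ = geomPS k := by
  have hc : PowerSeries.constantCoeff (1 - PowerSeries.X ^ k : PowerSeries ℚ) ≠ 0 := by
    rw [map_sub, map_one, map_pow, PowerSeries.constantCoeff_X, zero_pow (by omega), sub_zero]
    exact one_ne_zero
  rw [PowerSeries.inv_eq_iff_mul_eq_one hc]
  ext j
  rw [mul_sub, mul_one, map_sub, PowerSeries.coeff_mul_X_pow', PowerSeries.coeff_one]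
  simp only [geomPS, PowerSeries.coeff_mk]
  rcases Nat.eq_zero_or_pos j with rfl | hj
  · simp [Nat.le_zero, hk.ne']
  · by_cases hdvd : k ∣ j
    · have hkj : k ≤ j := Nat.le_of_dvd hj hdvd
      have : k ∣ j - k := (Nat.dvd_sub hdvd dvd_rfl)
      simp [hdvd, hkj, this, hj.ne']
    · by_cases hkj : k ≤ j
      · have : ¬ k ∣ j - k := fun h4 => hdvd (by
          have := Nat.dvd_add h4 (dvd_refl k)
          rwa [Nat.sub_add_cancel hkj] at this)
        simp [hdvd, hkj, this, hj.ne']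
      · simp [hdvd, hkj, hj.ne']

lemma coeff_eq_card (n m N : ℕ) :
    PowerSeries.coeff (R := ℚ) N
      (∏ i ∈ Finset.range m, ((1 - PowerSeries.X ^ (i + 1) : PowerSeries ℚ)⁻¹) ^ n) =
    ((((Finset.range m ×ˢ Finset.range n).finsuppAntidiag N).filter
      (fun l => ∀ p ∈ Finset.range m ×ˢ Finset.range n, (p.1 + 1) ∣ l p)).card : ℚ) := by
  have h1 : ∀ i ∈ Finset.range m, ((1 - PowerSeries.X ^ (i+1) : PowerSeries ℚ)⁻¹)^n
      = ∏ r ∈ Finset.range n, geomPS (i+1) := by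
    intro i _
    rw [geom_inv (Nat.succ_pos i), Finset.prod_const, Finset.card_range]
  rw [Finset.prod_congr rfl h1, ← Finset.prod_product' (f := fun i _ => geomPS (i+1))]
  rw [PowerSeries.coeff_prod]
  have h2 : ∀ l ∈ (Finset.range m ×ˢ Finset.range n).finsuppAntidiag N,
      (∏ p ∈ Finset.range m ×ˢ Finset.range n, PowerSeries.coeff (l p) (geomPS (p.1+1)))
        = if (∀ p ∈ Finset.range m ×ˢ Finset.range n, (p.1 + 1) ∣ l p) then (1:ℚ) else 0 := by
    intro l _
    rw [← Finset.prod_boole]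
    apply Finset.prod_congr rfl
    intro p _
    rw [geomPS, PowerSeries.coeff_mk]
  rw [Finset.sum_congr rfl h2, Finset.sum_boole]

lemma sum_swap' {n m : ℕ} (g : ℕ → ℕ → ℕ) :
    ∑ q : Fin n × Fin m, g (q.2 : ℕ) (q.1 : ℕ)
      = ∑ p ∈ Finset.range m ×ˢ Finset.range n, g p.1 p.2 := by
  rw [Finset.sum_product (f := fun p => g p.1 p.2), Fintype.sum_prod_type, Finset.sum_comm]
  rw [← Fin.sum_univ_eq_sum_range (fun b => ∑ a ∈ Finset.range n, g b a) m]
  apply Finset.sum_congr rfl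
  intro b _
  exact Fin.sum_univ_eq_sum_range (fun a => g (b : ℕ) a) n

noncomputable def mkFinsupp (n m : ℕ) (f : Fin n × Fin m → ℕ) : (ℕ × ℕ) →₀ ℕ :=
  Finsupp.onFinset (Finset.range m ×ˢ Finset.range n)
    (fun p => if h : p.1 < m ∧ p.2 < n then (p.1 + 1) * f (⟨p.2, h.2⟩, ⟨p.1, h.1⟩) else 0)
    (fun p hp => by
      simp only [Finset.mem_product, Finset.mem_range]
      by_contra hc
      exact hp (dif_neg hc))

lemma mkFinsupp_apply (n m : ℕ) (f : Fin n × Fin m → ℕ) (p : ℕ × ℕ) :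
    mkFinsupp n m f p = if h : p.1 < m ∧ p.2 < n then (p.1 + 1) * f (⟨p.2, h.2⟩, ⟨p.1, h.1⟩) else 0 :=
  rfl

noncomputable def matEquiv (n m N : ℕ) :
    {l : (ℕ × ℕ) →₀ ℕ // l ∈ (((Finset.range m ×ˢ Finset.range n).finsuppAntidiag N).filter
      (fun l => ∀ p ∈ Finset.range m ×ˢ Finset.range n, (p.1 + 1) ∣ l p))} ≃
    {f : Fin n × Fin m → ℕ // ∑ p : Fin n × Fin m, ((p.2 : ℕ) + 1) * f p = N} where
  toFun := fun ⟨l, hl⟩ => ⟨fun q => l ((q.2 : ℕ), (q.1 : ℕ)) / ((q.2 : ℕ) + 1), by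
    obtain ⟨hmem, hdvd⟩ := Finset.mem_filter.1 hl
    obtain ⟨hsum, hsupp⟩ := Finset.mem_finsuppAntidiag.1 hmem
    have := sum_swap' (n := n) (m := m) (fun v r => (v + 1) * (l (v, r) / (v + 1)))
    rw [this]
    rw [← hsum]
    apply Finset.sum_congr rfl
    intro p hp
    rw [Nat.mul_div_cancel' (by simpa using hdvd p hp)]⟩
  invFun := fun ⟨f, hf⟩ => ⟨mkFinsupp n m f, by
    apply Finset.mem_filter.2
    constructor
    · apply Finset.mem_finsuppAntidiag.2
      constructor
      · have hswap := sum_swap' (n := n) (m := m)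
          (fun v r => if h : v < m ∧ r < n then (v + 1) * f (⟨r, h.2⟩, ⟨v, h.1⟩) else 0)
        rw [← hf]
        have heq : ∀ p ∈ Finset.range m ×ˢ Finset.range n,
            mkFinsupp n m f p
            = (fun v r => if h : v < m ∧ r < n then (v + 1) * f (⟨r, h.2⟩, ⟨v, h.1⟩) else 0) p.1 p.2 := by
          intro p _
          rw [mkFinsupp_apply]
        rw [Finset.sum_congr rfl heq, ← hswap]
        apply Finset.sum_congr rfl
        intro q _
        rw [dif_pos ⟨q.2.isLt, q.1.isLt⟩]
      · exact Finsupp.support_onFinset_subset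
    · intro p hp
      rw [mkFinsupp_apply]
      simp only [Finset.mem_product, Finset.mem_range] at hp
      rw [dif_pos ⟨hp.1, hp.2⟩]
      exact dvd_mul_right _ _⟩
  left_inv := by
    rintro ⟨l, hl⟩
    obtain ⟨hmem, hdvd⟩ := Finset.mem_filter.1 hl
    obtain ⟨hsum, hsupp⟩ := Finset.mem_finsuppAntidiag.1 hmem
    apply Subtype.ext
    apply Finsupp.ext
    intro p
    rw [mkFinsupp_apply]
    by_cases h : p.1 < m ∧ p.2 < n
    · rw [dif_pos h]
      have hps : p ∈ Finset.range m ×ˢ Finset.range n := by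
        simp only [Finset.mem_product, Finset.mem_range]; exact h
      have := hdvd p hps
      have hl2 : l (p.1, p.2) = l p := by rw [Prod.mk.eta]
      rw [hl2, Nat.mul_div_cancel' (by simpa using this)]
    · rw [dif_neg h]
      symm
      rw [← Finsupp.notMem_support_iff]
      intro hmem2
      have := hsupp hmem2
      simp only [Finset.mem_product, Finset.mem_range] at this
      exact h this
  right_inv := by
    rintro ⟨f, hf⟩
    apply Subtype.ext
    funext q
    show mkFinsupp n m f ((q.2 : ℕ), (q.1 : ℕ)) / ((q.2 : ℕ) + 1) = f q
    rw [mkFinsupp_apply]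
    rw [dif_pos (⟨q.2.isLt, q.1.isLt⟩ : ((q.2 : ℕ), (q.1 : ℕ)).1 < m ∧ ((q.2 : ℕ), (q.1 : ℕ)).2 < n)]
    simp [Nat.mul_div_cancel_left]

lemma card_filter_eq (n m N : ℕ) :
    ((((Finset.range m ×ˢ Finset.range n).finsuppAntidiag N).filter
      (fun l => ∀ p ∈ Finset.range m ×ˢ Finset.range n, (p.1 + 1) ∣ l p)).card)
    = Nat.card {f : Fin n × Fin m → ℕ // ∑ p : Fin n × Fin m, ((p.2 : ℕ) + 1) * f p = N} := by
  rw [← Nat.card_eq_finsetCard]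
  exact Nat.card_congr (matEquiv n m N)

end CVaux

/-- Coefficient-wise form of
`Σ_{π ∈ PP(∞,n,m)} q^{|π|_c} = Π_{i=1}^m (1 - q^i)^{-n}`. -/
theorem corner_volume_gen_fun (n m N : ℕ) :
    PowerSeries.coeff (R := ℚ) N
      (∏ i ∈ Finset.range m, ((1 - PowerSeries.X ^ (i + 1) : PowerSeries ℚ)⁻¹) ^ n) =
    Nat.card {π : PlanePartition // π.RowsLE n ∧ π.EntriesLE m ∧ π.cvol = N} := by
  have h1 := CVaux.coeff_eq_card n m N
  have h2 := CVaux.card_filter_eq n m N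
  have h3 := Nat.card_congr (CVaux.ppEquiv n m N)
  rw [h1, h2, h3]
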